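/- Let f : ℝⁿ → ℝ be convex and differentiable, and L₁-smooth with respect to the ℓ1 norm: f(x + γz) ≤ f(x) + γ⟨∇f(x), z⟩ + (L₁/2)γ² for all x ∈ ℝⁿ, all z with ‖z‖₁ = 1, and all γ > 0, with L₁ > 0. Let x⋆ be a minimizer of f over ℝⁿ, and let R₁ ≥ 0 satisfy ‖x − x⋆‖₁ ≤ R₁ for every x with f(x) ≤ f(x₀). Define steepest coordinate descent from x₀: i_t ∈ argmax_i |∂_i f(x_t)| and x_{t+1} = x_t − (1/L₁)·∂_{i_t} f(x_t)·e_{i_t}, where e_i are the standard basis vectors. Then for every t ≥ 0: f(x_{t+1}) − f(x⋆) ≤ 2·L₁·R₁²/(t + 2). -/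

import Mathlib

open Set RealInnerProductSpace

private lemma grad_convex_ineq {n : ℕ} {f : EuclideanSpace ℝ (Fin n) → ℝ}
    {g x : EuclideanSpace ℝ (Fin n)} (hconv : ConvexOn ℝ univ f)
    (h : HasGradientAt f g x) (y : EuclideanSpace ℝ (Fin n)) :
    f x + ⟪g, y - x⟫ ≤ f y := by
  set v := y - x with hv
  have hc : HasDerivAt (fun t : ℝ => f (x + t • v)) ⟪g, v⟫ 0 := by
    have h1 : HasDerivAt (fun t : ℝ => x + t • v) v 0 := by
      simpa using ((hasDerivAt_id (0 : ℝ)).smul_const v).const_add x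
    have hx0 : x + (0 : ℝ) • v = x := by simp
    have hf : HasFDerivAt f (InnerProductSpace.toDual ℝ (EuclideanSpace ℝ (Fin n)) g)
        (x + (0 : ℝ) • v) := by
      rw [hx0]; exact hasGradientAt_iff_hasFDerivAt.mp h
    have h2 := hf.comp_hasDerivAt 0 h1
    exact h2
  have hslope : ∀ t ∈ Set.Ioc (0 : ℝ) 1, slope (fun t : ℝ => f (x + t • v)) 0 t ≤ f y - f x := by
    intro t ht
    have hco := hconv.2 (mem_univ x) (mem_univ y) (by linarith [ht.1, ht.2] : (0:ℝ) ≤ 1 - t)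
      ht.1.le (by ring)
    have hxy : (1 - t) • x + t • y = x + t • v := by
      rw [hv, smul_sub, sub_smul, one_smul]; abel
    rw [hxy] at hco
    rw [slope_def_field]
    simp only [zero_smul, add_zero, sub_zero, smul_eq_mul] at *
    rw [div_le_iff₀ ht.1]
    nlinarith [hco]
  have htend : Filter.Tendsto (slope (fun t : ℝ => f (x + t • v)) 0) (nhdsWithin 0 (Set.Ioi 0))
      (nhds ⟪g, v⟫) := by
    have := hasDerivAt_iff_tendsto_slope.mp hc
    exact this.mono_left (nhdsWithin_mono 0 (fun a ha => ne_of_gt ha))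
  have hle : ⟪g, v⟫ ≤ f y - f x := by
    refine le_of_tendsto htend ?_
    filter_upwards [Ioc_mem_nhdsGT_of_mem (Set.left_mem_Ico.mpr one_pos)] with t ht
    exact hslope t ht
  linarith

private lemma rec_bound (C : ℝ) (hC : 0 < C) (δ : ℕ → ℝ) (hnn : ∀ s, 0 ≤ δ s)
    (hrec : ∀ s, δ (s + 1) ≤ δ s - δ s ^ 2 / C) :
    ∀ t : ℕ, δ (t + 1) ≤ C / ((t : ℝ) + 2) := by
  intro t
  induction t with
  | zero =>
    have h1 := hrec 0
    have h0 := hnn 0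
    have hdiv : δ 0 ^ 2 / C * C = δ 0 ^ 2 := div_mul_cancel₀ _ hC.ne'
    have h2 : ((0 : ℕ) : ℝ) + 2 = 2 := by norm_num
    rw [h2]
    rw [le_div_iff₀ (by norm_num : (0:ℝ) < 2)]
    nlinarith [sq_nonneg (δ 0 - C / 2), mul_le_mul_of_nonneg_right h1 hC.le]
  | succ t ih =>
    have hr := hrec (t + 1)
    have ha := hnn (t + 1)
    set a := δ (t + 1) with haa
    set T := (t : ℝ) with hT
    have hTnn : (0 : ℝ) ≤ T := Nat.cast_nonneg t
    have hT2 : (0 : ℝ) < T + 2 := by linarith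
    have hT3 : (0 : ℝ) < T + 3 := by linarith
    have h1' : a * (T + 2) ≤ C := by
      rw [← le_div_iff₀ hT2]; exact ih
    have hCa : 0 ≤ C - a := by nlinarith
    have key : a - a ^ 2 / C ≤ C / (T + 3) := by
      have heq : a - a ^ 2 / C = a * (C - a) / C := by
        field_simp
      rw [heq, div_le_div_iff₀ hC hT3]
      nlinarith [mul_nonneg (sub_nonneg.mpr h1') hCa, sq_nonneg a]
    have hgoal : ((t + 1 : ℕ) : ℝ) + 2 = T + 3 := by push_cast; ring
    rw [hgoal]
    linarith

/-- sublinear rate of steepest coordinate descent for a convex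
function `f : ℝⁿ → ℝ` that is `L₁`-smooth w.r.t. the ℓ1 norm. -/
theorem stmt_7 (n : ℕ) (f : EuclideanSpace ℝ (Fin n) → ℝ)
    (f' : EuclideanSpace ℝ (Fin n) → EuclideanSpace ℝ (Fin n))
    (hgrad : ∀ x, HasGradientAt f (f' x) x)
    (hconv : ConvexOn ℝ univ f)
    (L1 : ℝ) (hL1 : 0 < L1)
    (hsmooth : ∀ x z : EuclideanSpace ℝ (Fin n), (∑ i, |z i|) = 1 →
      ∀ γ : ℝ, 0 < γ → f (x + γ • z) ≤ f x + γ * ⟪f' x, z⟫ + L1 / 2 * γ ^ 2)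
    (xs : EuclideanSpace ℝ (Fin n)) (hmin : ∀ y, f xs ≤ f y)
    (R1 : ℝ) (hR1 : 0 ≤ R1)
    (x : ℕ → EuclideanSpace ℝ (Fin n)) (i : ℕ → Fin n)
    (hlevel : ∀ y : EuclideanSpace ℝ (Fin n), f y ≤ f (x 0) → (∑ j, |y j - xs j|) ≤ R1)
    (hsteep : ∀ t j, |f' (x t) j| ≤ |f' (x t) (i t)|)
    (hupd : ∀ t, x (t + 1) = x t - (f' (x t) (i t) / L1) • EuclideanSpace.single (i t) 1) :
    ∀ t : ℕ, f (x (t + 1)) - f xs ≤ 2 * L1 * R1 ^ 2 / ((t : ℝ) + 2) := by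
  -- inner product with scaled basis vector
  have key_inner : ∀ (a : EuclideanSpace ℝ (Fin n)) (j : Fin n) (c : ℝ),
      ⟪f' a, (c • EuclideanSpace.single j (1:ℝ) : EuclideanSpace ℝ (Fin n))⟫ = c * f' a j := by
    intro a j c
    rw [real_inner_smul_right, EuclideanSpace.inner_single_right]
    simp [mul_comm]
  -- ℓ1 norm of scaled basis vector
  have hsum1 : ∀ (j : Fin n) (c : ℝ), |c| = 1 →
      (∑ k, |((c • EuclideanSpace.single j (1:ℝ) : EuclideanSpace ℝ (Fin n))) k|) = 1 := by
    intro j c hc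
    have : ∀ k, |((c • EuclideanSpace.single j (1:ℝ) : EuclideanSpace ℝ (Fin n))) k|
        = if k = j then |c| else 0 := by
      intro k
      simp [EuclideanSpace.single_apply, abs_mul]
      split_ifs <;> simp
    simp only [this]
    rw [Finset.sum_ite_eq' Finset.univ j (fun _ => |c|)]
    simp [hc]
  -- descent lemma
  have descent : ∀ s, f (x (s+1)) ≤ f (x s) - (f' (x s) (i s))^2 / (2*L1) := by
    intro s
    set G := f' (x s) (i s) with hG
    rcases eq_or_ne G 0 with h0 | h0
    · rw [hupd s, ← hG, h0]
      simp
    · have hGabs : (0:ℝ) < |G| := abs_pos.mpr h0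
      set γ : ℝ := |G| / L1 with hγdef
      have hγ : 0 < γ := div_pos hGabs hL1
      set z : EuclideanSpace ℝ (Fin n) := (-(G/|G|)) • EuclideanSpace.single (i s) (1:ℝ) with hz
      have hz1 : (∑ k, |z k|) = 1 := by
        apply hsum1
        rw [abs_neg, abs_div, abs_abs, div_self hGabs.ne']
      have hxz : x s + γ • z = x (s+1) := by
        rw [hupd s, hz, smul_smul]
        have hcoef : γ * -(G / |G|) = -(G / L1) := by
          rw [hγdef]; field_simp
        rw [hcoef, neg_smul, ← sub_eq_add_neg]
      have hinner : ⟪f' (x s), z⟫ = -|G| := by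
        rw [hz, key_inner, ← hG]
        rw [neg_mul, div_mul_eq_mul_div, ← abs_mul_abs_self, mul_div_assoc,
          div_self hGabs.ne', mul_one]
      have hsm := hsmooth (x s) z hz1 γ hγ
      rw [hxz, hinner] at hsm
      have habs : |G| * |G| = G * G := abs_mul_abs_self G
      have hγL : γ * L1 = |G| := div_mul_cancel₀ _ hL1.ne'
      have hgg : G^2 / (2*L1) = γ * |G| / 2 := by
        rw [hγdef]; rw [pow_two, ← habs]; field_simp
      calc f (x (s+1)) ≤ f (x s) + γ * (-|G|) + L1/2 * γ^2 := hsm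
        _ = f (x s) - γ * |G| / 2 := by linear_combination (γ / 2) * hγL
        _ = f (x s) - G^2/(2*L1) := by rw [hgg]
  -- monotone decrease
  have mono : ∀ s, f (x s) ≤ f (x 0) := by
    intro s
    induction s with
    | zero => exact le_refl _
    | succ s ih =>
      have := descent s
      have hpos : (0:ℝ) ≤ (f' (x s) (i s))^2 / (2*L1) := by positivity
      linarith
  -- gap bound
  have gap : ∀ s, f (x s) - f xs ≤ |f' (x s) (i s)| * R1 := by
    intro s
    have h1 := grad_convex_ineq hconv (hgrad (x s)) xs
    have h2 : f (x s) - f xs ≤ ⟪f' (x s), x s - xs⟫ := by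
      have hneg : ⟪f' (x s), xs - x s⟫ = -⟪f' (x s), x s - xs⟫ := by
        rw [← inner_neg_right, neg_sub]
      rw [hneg] at h1
      linarith
    have h3 : ⟪f' (x s), x s - xs⟫ ≤ |f' (x s) (i s)| * R1 := by
      have hip : ⟪f' (x s), x s - xs⟫ = ∑ j, f' (x s) j * (x s j - xs j) := by
        simp [PiLp.inner_apply, RCLike.inner_apply, conj_trivial, PiLp.sub_apply]
        exact Finset.sum_congr rfl (fun _ _ => mul_comm _ _)
      rw [hip]
      have hstep : ∀ j : Fin n, f' (x s) j * (x s j - xs j)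
          ≤ |f' (x s) (i s)| * |x s j - xs j| := by
        intro j
        calc f' (x s) j * (x s j - xs j) ≤ |f' (x s) j * (x s j - xs j)| := le_abs_self _
          _ = |f' (x s) j| * |x s j - xs j| := abs_mul _ _
          _ ≤ |f' (x s) (i s)| * |x s j - xs j| :=
            mul_le_mul_of_nonneg_right (hsteep s j) (abs_nonneg _)
      calc (∑ j, f' (x s) j * (x s j - xs j)) ≤ ∑ j, |f' (x s) (i s)| * |x s j - xs j| :=
            Finset.sum_le_sum (fun j _ => hstep j)
        _ = |f' (x s) (i s)| * ∑ j, |x s j - xs j| := by rw [Finset.mul_sum]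
        _ ≤ |f' (x s) (i s)| * R1 :=
            mul_le_mul_of_nonneg_left (hlevel _ (mono s)) (abs_nonneg _)
    linarith
  have hδnn : ∀ s, 0 ≤ f (x s) - f xs := fun s => sub_nonneg.mpr (hmin _)
  rcases eq_or_lt_of_le hR1 with hR0 | hR0
  · -- R1 = 0
    intro t
    have hle := gap (t+1)
    rw [← hR0] at hle
    have hrhs : (0:ℝ) ≤ 2 * L1 * R1 ^ 2 / ((t : ℝ) + 2) := by positivity
    simp only [mul_zero] at hle
    linarith
  · -- R1 > 0
    have hC : 0 < 2*L1*R1^2 := by positivity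
    have hrec : ∀ s, (f (x (s+1)) - f xs) ≤ (f (x s) - f xs) - (f (x s) - f xs)^2 / (2*L1*R1^2) := by
      intro s
      have hd := descent s
      have hg := gap s
      have hδ := hδnn s
      have h1 : (f (x s) - f xs)^2 ≤ (f' (x s) (i s))^2 * R1^2 := by
        nlinarith [sq_abs (f' (x s) (i s)), abs_nonneg (f' (x s) (i s))]
      have h2 : (f (x s) - f xs)^2 / (2*L1*R1^2) ≤ (f' (x s) (i s))^2 / (2*L1) := by
        rw [div_le_div_iff₀ (by positivity) (by positivity)]
        nlinarith [h1, hL1]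
      linarith
    exact rec_bound (2*L1*R1^2) hC (fun s => f (x s) - f xs) hδnn hrec
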